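/- Let $S$ be a spectral topological space in which every quasi-compact open subset is closed (e.g., a profinite set), and let $F$ be a nonzero sheaf of $\mathbf{F}_p$-vector spaces on $S$. Then $H^0(S, F) \neq 0$. -/

import Mathlib

/-!
Statement 15: Let `S` be a spectral topological space in which every quasi-compact open
subset is closed (e.g. a profinite set), and let `F` be a nonzero sheaf of `𝔽_p`-vector
spaces on `S`.  Then `H^0 (S, F) ≠ 0`.
-/

universe u

open CategoryTheory TopologicalSpace Opposite

/-- A spectral topological space: quasi-compact, T0, quasi-sober, quasi-separated, with a
basis of quasi-compact open subsets. -/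
def IsSpectralSpace (S : Type u) [TopologicalSpace S] : Prop :=
  CompactSpace S ∧ T0Space S ∧ QuasiSober S ∧ QuasiSeparatedSpace S ∧
    ∀ (x : S) (U : Opens S), x ∈ U → ∃ V : Opens S, IsCompact (V : Set S) ∧ x ∈ V ∧ V ≤ U

theorem global_sections_ne_zero_of_nonzero_sheaf
    (p : ℕ) (hp : p.Prime)
    (S : TopCat.{u}) (hspec : IsSpectralSpace S)
    (hqc : ∀ U : Opens S, IsCompact (U : Set S) → IsClosed (U : Set S))
    (F : Sheaf (Opens.grothendieckTopology S) (ModuleCat.{u} (ZMod p)))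
    (hF : ¬ Limits.IsZero F) :
    Nontrivial (F.val.obj (op ⊤)) := by
  classical
  -- view `F` as a sheaf on the topological space `S`
  let G : TopCat.Sheaf (ModuleCat.{u} (ZMod p)) S := F
  -- sections over an open set equal to `⊥` form a subsingleton
  have hsub : ∀ (U : Opens S), U = ⊥ → Subsingleton (F.val.obj (op U)) := by
    intro U hU
    have hterm := G.isTerminalOfEqEmpty (U := U) hU
    have hz : Limits.IsZero (F.val.obj (op U)) := hterm.isZero
    have hid : 𝟙 (F.val.obj (op U)) = 0 := (Limits.IsZero.iff_id_eq_zero _).mp hz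
    refine ⟨fun a b => ?_⟩
    have ha : a = 0 := by simpa using congrArg (fun f => f.hom a) hid
    have hb : b = 0 := by simpa using congrArg (fun f => f.hom b) hid
    rw [ha, hb]
  -- there is an open set with a nonzero section
  have hex : ∃ (U : Opens S) (s : F.val.obj (op U)), s ≠ 0 := by
    by_contra h
    push_neg at h
    apply hF
    have hssub : ∀ X : (Opens S)ᵒᵖ, Subsingleton (F.val.obj X) := fun X =>
      ⟨fun a b => by rw [h X.unop a, h X.unop b]⟩
    rw [Limits.IsZero.iff_id_eq_zero]
    ext X : 3
    haveI := hssub X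
    refine ModuleCat.hom_ext (LinearMap.ext fun x => ?_)
    exact Subsingleton.elim _ _
  obtain ⟨U, s, hs⟩ := hex
  -- find a quasi-compact open `V ≤ U` on which `s` restricts to a nonzero section
  set ι₀ := {V : Opens S // IsCompact (V : Set S) ∧ V ≤ U} with hι₀
  have hcover : U ≤ iSup (fun i : ι₀ => i.1) := by
    intro x hx
    obtain ⟨V, hVc, hxV, hVU⟩ := hspec.2.2.2.2 x U hx
    exact Opens.mem_iSup.mpr ⟨⟨V, hVc, hVU⟩, hxV⟩
  have hexV : ∃ i : ι₀, F.val.map (homOfLE i.2.2).op s ≠ 0 := by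
    by_contra h
    push_neg at h
    apply hs
    refine G.eq_of_locally_eq' (fun i : ι₀ => i.1) U (fun i => homOfLE i.2.2) hcover s 0 ?_
    intro i
    show F.val.map (homOfLE i.2.2).op s = F.val.map (homOfLE i.2.2).op 0
    rw [h i]
    simp
  obtain ⟨⟨V, hVc, hVU⟩, hsV⟩ := hexV
  set sV : F.val.obj (op V) := F.val.map (homOfLE hVU).op s with hsVdef
  -- `V` is clopen; let `W` be its open complement
  have hVclosed : IsClosed (V : Set S) := hqc V hVc
  set W : Opens S := ⟨(V : Set S)ᶜ, hVclosed.isOpen_compl⟩ with hW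
  have hVW : V ⊓ W = ⊥ := by
    apply Opens.ext
    simp [hW]
  have hWV : W ⊓ V = ⊥ := by rw [inf_comm]; exact hVW
  -- glue `sV` on `V` with `0` on `W`
  set U' : ULift.{u} Bool → Opens S := fun b => cond b.down V W with hU'
  have hcov : (⊤ : Opens S) ≤ iSup U' := by
    intro x _
    by_cases hx : x ∈ V
    · exact Opens.mem_iSup.mpr ⟨⟨true⟩, hx⟩
    · exact Opens.mem_iSup.mpr ⟨⟨false⟩, hx⟩
  set sf : ∀ i : ULift.{u} Bool, F.val.obj (op (U' i)) := fun i =>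
    match i with
    | ⟨true⟩ => sV
    | ⟨false⟩ => 0 with hsf
  have hcomp : TopCat.Presheaf.IsCompatible F.val U' sf := by
    rintro ⟨(_|_)⟩ ⟨(_|_)⟩
    · rfl
    · have := hsub (U' ⟨false⟩ ⊓ U' ⟨true⟩) (by exact hWV)
      exact Subsingleton.elim _ _
    · have := hsub (U' ⟨true⟩ ⊓ U' ⟨false⟩) (by exact hVW)
      exact Subsingleton.elim _ _
    · rfl
  obtain ⟨t, ht, -⟩ := G.existsUnique_gluing' U' ⊤ (fun _ => homOfLE le_top) hcov sf hcomp
  refine ⟨t, 0, fun h => ?_⟩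
  apply hsV
  have h2 : F.val.map (homOfLE (le_top : U' ⟨true⟩ ≤ ⊤)).op t = sV := ht ⟨true⟩
  rw [h] at h2
  simpa [hsVdef] using h2.symm
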